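/- For every integer N ≥ 2 there exists ε > 0 such that for every z ∈ ℂ with |z − 1| < ε, the polynomial P_{N,z} (a degree-N polynomial with real coefficients) has exactly N roots, all of which are real and simple (i.e., N pairwise distinct real roots). -/

import Mathlib

open Polynomial

/-- Chebyshev polynomials of the second kind (as functions on ℂ). -/
noncomputable def chebU : ℕ → ℂ → ℂ
  | 0, _ => 1
  | 1, y => 2 * y
  | n + 2, y => 2 * y * chebU (n + 1) y - chebU n y

/-- The secular polynomial `P_{N,z}(y) = z·conj z·U_{N−2}(y) − (z+conj z)·U_{N−1}(y) + U_N(y)`. -/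
noncomputable def Psec (N : ℕ) (z y : ℂ) : ℂ :=
  z * starRingEnd ℂ z * chebU (N - 2) y
    - (z + starRingEnd ℂ z) * chebU (N - 1) y + chebU N y

namespace Stmt11Aux

lemma chebU_eval (n : ℕ) (y : ℂ) : chebU n y = (Chebyshev.U ℂ (n:ℤ)).eval y := by
  induction n using Nat.twoStepInduction with
  | zero => simp [chebU, Chebyshev.U_zero]
  | one => simp [chebU, Chebyshev.U_one]
  | more n ih1 ih2 =>
    have hc : ((n + 2 : ℕ) : ℤ) = (n : ℤ) + 2 := by push_cast; ring
    rw [show chebU (n+2) y = 2 * y * chebU (n + 1) y - chebU n y from rfl, ih1, ih2,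
      hc, Chebyshev.U_add_two]
    push_cast
    simp [eval_mul]

lemma U_natDegree_le (n : ℕ) : (Chebyshev.U ℂ (n:ℤ)).natDegree ≤ n := by
  induction n using Nat.twoStepInduction with
  | zero => simp [Chebyshev.U_zero]
  | one =>
    rw [Nat.cast_one, Chebyshev.U_one]
    calc (2 * X : ℂ[X]).natDegree ≤ (2:ℂ[X]).natDegree + X.natDegree := natDegree_mul_le
      _ ≤ 1 := by simp [natDegree_ofNat]
  | more n ih1 ih2 =>
    have hc : ((n + 2 : ℕ) : ℤ) = (n : ℤ) + 2 := by push_cast; ring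
    rw [hc, Chebyshev.U_add_two]
    refine le_trans (natDegree_sub_le _ _) ?_
    have h1 : (2 * X * Chebyshev.U ℂ ((n:ℤ)+1)).natDegree ≤ n + 2 := by
      calc (2 * X * Chebyshev.U ℂ ((n:ℤ)+1)).natDegree
          ≤ (2 * X : ℂ[X]).natDegree + (Chebyshev.U ℂ ((n:ℤ)+1)).natDegree := natDegree_mul_le
        _ ≤ ((2:ℂ[X]).natDegree + X.natDegree) + (n+1) := by
            refine add_le_add natDegree_mul_le ?_
            rw [show ((n:ℤ)+1) = ((n+1 : ℕ):ℤ) by push_cast; ring]; exact ih2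
        _ ≤ n + 2 := by simp [natDegree_ofNat]; omega
    have h2 : (Chebyshev.U ℂ (n:ℤ)).natDegree ≤ n + 2 := ih1.trans (by omega)
    simp [h1, h2]

lemma U_coeff (n : ℕ) : (Chebyshev.U ℂ (n:ℤ)).coeff n = 2 ^ n := by
  induction n using Nat.twoStepInduction with
  | zero => simp [Chebyshev.U_zero]
  | one => rw [Nat.cast_one, Chebyshev.U_one, (map_ofNat C 2).symm]; simp
  | more n ih1 ih2 =>
    have hc : ((n + 2 : ℕ) : ℤ) = (n : ℤ) + 2 := by push_cast; ring
    rw [hc, Chebyshev.U_add_two, coeff_sub]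
    have hz : (Chebyshev.U ℂ (n:ℤ)).coeff (n+2) = 0 :=
      coeff_eq_zero_of_natDegree_lt (lt_of_le_of_lt (U_natDegree_le n) (by omega))
    have h1 : (2 * X * Chebyshev.U ℂ ((n:ℤ)+1)).coeff (n+2) = 2 ^ (n+2) := by
      rw [show (2 * X * Chebyshev.U ℂ ((n:ℤ)+1)) = C 2 * (X * Chebyshev.U ℂ ((n:ℤ)+1)) by
        rw [(map_ofNat C 2).symm, mul_assoc], coeff_C_mul, show n + 2 = (n+1) + 1 from rfl,
        coeff_X_mul, show ((n:ℤ)+1) = ((n+1 : ℕ):ℤ) by push_cast; ring, ih2]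
      ring
    rw [h1, hz]; ring
noncomputable def uR (n : ℕ) (t : ℝ) : ℝ := (Chebyshev.U ℝ (n:ℤ)).eval t

noncomputable def psR (N : ℕ) (z : ℂ) (t : ℝ) : ℝ :=
  Complex.normSq z * uR (N-2) t - 2 * z.re * uR (N-1) t + uR N t

lemma chebU_ofReal (n : ℕ) (t : ℝ) : chebU n (t : ℂ) = ((uR n t : ℝ) : ℂ) := by
  rw [chebU_eval, uR, ← Chebyshev.map_U Complex.ofRealHom (n:ℤ),
    show ((t:ℂ)) = Complex.ofRealHom t from rfl, eval_map, eval₂_at_apply]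
  rfl

lemma Psec_ofReal (N : ℕ) (z : ℂ) (t : ℝ) : Psec N z (t : ℂ) = ((psR N z t : ℝ) : ℂ) := by
  rw [Psec, psR, chebU_ofReal, chebU_ofReal, chebU_ofReal, Complex.mul_conj, Complex.add_conj]
  push_cast
  ring

lemma psR_one (N : ℕ) (hN : 2 ≤ N) (t : ℝ) : psR N 1 t = 2 * (t - 1) * uR (N-1) t := by
  have h := Chebyshev.U_add_two ℝ ((N:ℤ) - 2)
  rw [show ((N:ℤ)-2)+2 = (N:ℤ) by ring, show ((N:ℤ)-2)+1 = (N:ℤ)-1 by ring] at h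
  have e1 : ((N-1 : ℕ) : ℤ) = (N:ℤ) - 1 := by omega
  have e2 : ((N-2 : ℕ) : ℤ) = (N:ℤ) - 2 := by omega
  have hev : uR N t = 2 * t * uR (N-1) t - uR (N-2) t := by
    rw [uR, uR, uR, e1, e2, h]; simp [eval_mul]
  rw [psR, hev]
  simp [Complex.normSq_one]
  ring

lemma uR_cos (n : ℕ) (θ : ℝ) : uR n (Real.cos θ) * Real.sin θ = Real.sin ((n+1) * θ) := by
  have := Chebyshev.U_real_cos θ (n : ℤ)
  rw [uR, this]
  norm_num

lemma continuous_psR (N : ℕ) (t : ℝ) : Continuous fun z : ℂ => psR N z t := by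
  unfold psR
  exact ((Complex.continuous_normSq.mul continuous_const).sub
    ((continuous_const.mul Complex.continuous_re).mul continuous_const)).add continuous_const

lemma continuous_psR_t (N : ℕ) (z : ℂ) : Continuous fun t : ℝ => psR N z t := by
  unfold psR uR
  exact ((continuous_const.mul (Polynomial.continuous _)).sub
    (continuous_const.mul (Polynomial.continuous _))).add (Polynomial.continuous _)

lemma uR_two_ge (n : ℕ) : 1 ≤ uR n 2 ∧ uR n 2 ≤ uR (n+1) 2 := by
  induction n with
  | zero =>
    constructor
    · simp [uR, Chebyshev.U_zero]
    · rw [uR, uR, Nat.cast_one, Nat.cast_zero, Chebyshev.U_zero, Chebyshev.U_one]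
      norm_num
  | succ n ih =>
    obtain ⟨h1, h2⟩ := ih
    have hrec : uR (n+2) 2 = 2 * 2 * uR (n+1) 2 - uR n 2 := by
      rw [uR, uR, uR, show ((n+2:ℕ):ℤ) = (n:ℤ)+2 by push_cast; ring, Chebyshev.U_add_two,
        show ((n:ℤ)+1) = ((n+1:ℕ):ℤ) by push_cast; ring]
      simp [eval_mul]
    constructor
    · linarith
    · rw [hrec]; nlinarith
noncomputable def thp (N k : ℕ) : ℝ := ((k:ℝ) - 1/2) * Real.pi / N

noncomputable def sp (N : ℕ) : ℕ → ℝ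
  | 0 => 2
  | (k+1) => Real.cos (thp N (k+1))

lemma sp_zero (N : ℕ) : sp N 0 = 2 := rfl

lemma sp_eq_cos {N k : ℕ} (hk : k ≠ 0) : sp N k = Real.cos (thp N k) := by
  cases k with
  | zero => exact absurd rfl hk
  | succ m => rfl

lemma thp_pos {N k : ℕ} (hN : 2 ≤ N) (hk : 1 ≤ k) : 0 < thp N k := by
  rw [thp]
  apply div_pos
  · have : (1:ℝ) ≤ (k:ℝ) := by exact_mod_cast hk
    nlinarith [Real.pi_pos]
  · have : 0 < N := by omega
    exact_mod_cast this

lemma thp_lt_pi {N k : ℕ} (hN : 2 ≤ N) (hk : k ≤ N) : thp N k < Real.pi := by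
  have hNpos : (0:ℝ) < (N:ℝ) := by exact_mod_cast (by omega : 0 < N)
  rw [thp, div_lt_iff₀ hNpos]
  have : (k:ℝ) ≤ (N:ℝ) := by exact_mod_cast hk
  nlinarith [Real.pi_pos]

lemma thp_mono {N i j : ℕ} (hN : 2 ≤ N) (hij : i < j) : thp N i < thp N j := by
  have hNpos : (0:ℝ) < (N:ℝ) := by exact_mod_cast (by omega : 0 < N)
  rw [thp, thp, div_lt_div_iff_of_pos_right hNpos]
  have : (i:ℝ) < (j:ℝ) := by exact_mod_cast hij
  nlinarith [Real.pi_pos]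

lemma sp_anti {N i j : ℕ} (hN : 2 ≤ N) (hij : i < j) (hj : j ≤ N) : sp N j < sp N i := by
  have hj1 : j ≠ 0 := by omega
  rw [sp_eq_cos hj1]
  rcases Nat.eq_zero_or_pos i with hi | hi
  · subst hi
    rw [sp_zero]
    have := Real.cos_le_one (thp N j)
    linarith
  · rw [sp_eq_cos (by omega : i ≠ 0)]
    exact Real.cos_lt_cos_of_nonneg_of_le_pi (le_of_lt (thp_pos hN hi))
      (le_of_lt (thp_lt_pi hN hj)) (thp_mono hN hij)

lemma sign_one {N k : ℕ} (hN : 2 ≤ N) (hk : k ≤ N) :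
    0 < (-1 : ℝ)^k * psR N 1 (sp N k) := by
  rcases Nat.eq_zero_or_pos k with hk0 | hk1
  · subst hk0
    rw [sp_zero, pow_zero, one_mul, psR_one N hN]
    have := (uR_two_ge (N-1)).1
    nlinarith
  · have hk0 : k ≠ 0 := by omega
    have hθp := thp_pos hN hk1
    have hθπ := thp_lt_pi hN hk
    have hsin : 0 < Real.sin (thp N k) := Real.sin_pos_of_pos_of_lt_pi hθp hθπ
    have hcos : Real.cos (thp N k) < 1 := by
      have := Real.cos_lt_cos_of_nonneg_of_le_pi (le_refl 0) (le_of_lt hθπ) hθp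
      simpa using this
    have hNpos : (0:ℝ) < (N:ℝ) := by exact_mod_cast (by omega : 0 < N)
    have hNθ : (N:ℝ) * thp N k = (k:ℝ) * Real.pi - Real.pi/2 := by
      rw [thp]
      field_simp
    have hu : uR (N-1) (Real.cos (thp N k)) * Real.sin (thp N k)
        = Real.sin ((N:ℝ) * thp N k) := by
      rw [uR_cos]
      congr 1
      have hc : ((N-1:ℕ):ℝ) = (N:ℝ) - 1 := by
        have h1 : (1:ℕ) ≤ N := by omega
        push_cast [h1]; ring
      rw [hc]; ring
    have hs : Real.sin ((N:ℝ) * thp N k) = -((-1:ℝ)^k) := by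
      rw [hNθ, show (k:ℝ)*Real.pi - Real.pi/2 = (k:ℕ)*Real.pi - Real.pi/2 by norm_num,
        Real.sin_nat_mul_pi_sub, Real.sin_pi_div_two]
      ring
    have hval : psR N 1 (sp N k) * Real.sin (thp N k)
        = 2 * (Real.cos (thp N k) - 1) * (-((-1:ℝ)^k)) := by
      rw [sp_eq_cos hk0, psR_one N hN]
      linear_combination 2 * (Real.cos (thp N k) - 1) * hu
        + 2 * (Real.cos (thp N k) - 1) * hs
    have hsq : ((-1:ℝ)^k) * ((-1:ℝ)^k) = 1 := by
      rw [← pow_add]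
      exact Even.neg_one_pow ⟨k, rfl⟩
    have key : ((-1:ℝ)^k * psR N 1 (sp N k)) * Real.sin (thp N k)
        = 2 * (1 - Real.cos (thp N k)) := by
      calc ((-1:ℝ)^k * psR N 1 (sp N k)) * Real.sin (thp N k)
          = (-1:ℝ)^k * (psR N 1 (sp N k) * Real.sin (thp N k)) := by ring
        _ = (-1:ℝ)^k * (2 * (Real.cos (thp N k) - 1) * (-((-1:ℝ)^k))) := by rw [hval]
        _ = ((-1:ℝ)^k * (-1:ℝ)^k) * (2 * (1 - Real.cos (thp N k))) := by ring
        _ = 2 * (1 - Real.cos (thp N k)) := by rw [hsq]; ring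
    nlinarith
end Stmt11Aux

open Stmt11Aux in
theorem stmt11 (N : ℕ) (hN : 2 ≤ N) :
    ∃ ε > (0 : ℝ), ∀ z : ℂ, ‖z - 1‖ < ε →
      ∃ S : Finset ℝ, S.card = N ∧
        ∀ y : ℂ, Psec N z y = 0 ↔ ∃ r ∈ S, (r : ℂ) = y := by
  have hev : ∀ᶠ z : ℂ in nhds 1, ∀ k ∈ Finset.range (N+1),
      0 < (-1:ℝ)^k * psR N z (sp N k) := by
    rw [Filter.eventually_all_finset]
    intro k hk
    have hk' : k ≤ N := Nat.lt_succ_iff.mp (Finset.mem_range.mp hk)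
    have hcont : Continuous fun z : ℂ => (-1:ℝ)^k * psR N z (sp N k) :=
      continuous_const.mul (continuous_psR N _)
    exact (hcont.continuousAt (x := 1)).eventually
      (eventually_gt_nhds (sign_one hN hk'))
  rw [Metric.eventually_nhds_iff] at hev
  obtain ⟨ε, hε, hball⟩ := hev
  refine ⟨ε, hε, ?_⟩
  intro z hz
  have hsgn : ∀ k ≤ N, 0 < (-1:ℝ)^k * psR N z (sp N k) := by
    intro k hk
    exact hball (by rw [Complex.dist_eq]; exact hz) k (Finset.mem_range.mpr (by omega))
  -- IVT: a root in each interval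
  have hroot : ∀ k : Fin N, ∃ t, sp N ((k:ℕ)+1) < t ∧ t < sp N (k:ℕ) ∧ psR N z t = 0 := by
    intro k
    have hklt : (k:ℕ) < N := k.2
    have hle : sp N ((k:ℕ)+1) ≤ sp N (k:ℕ) :=
      le_of_lt (sp_anti hN (by omega) (by omega))
    have hcont : ContinuousOn (psR N z) (Set.Icc (sp N ((k:ℕ)+1)) (sp N (k:ℕ))) :=
      (continuous_psR_t N z).continuousOn
    rcases Nat.even_or_odd (k:ℕ) with he | ho
    · have h1 : 0 < psR N z (sp N (k:ℕ)) := by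
        have := hsgn (k:ℕ) (by omega); rwa [he.neg_one_pow, one_mul] at this
      have h2 : psR N z (sp N ((k:ℕ)+1)) < 0 := by
        have := hsgn ((k:ℕ)+1) (by omega)
        rw [pow_succ, he.neg_one_pow] at this; linarith
      obtain ⟨t, htmem, ht0⟩ := intermediate_value_Ioo hle hcont
        (Set.mem_Ioo.mpr ⟨h2, h1⟩)
      exact ⟨t, htmem.1, htmem.2, ht0⟩
    · have h1 : psR N z (sp N (k:ℕ)) < 0 := by
        have := hsgn (k:ℕ) (by omega); rw [ho.neg_one_pow] at this; linarith
      have h2 : 0 < psR N z (sp N ((k:ℕ)+1)) := by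
        have := hsgn ((k:ℕ)+1) (by omega)
        rwa [pow_succ, ho.neg_one_pow, neg_one_mul, neg_neg, one_mul] at this
      obtain ⟨t, htmem, ht0⟩ := intermediate_value_Ioo' hle hcont
        (Set.mem_Ioo.mpr ⟨h1, h2⟩)
      exact ⟨t, htmem.1, htmem.2, ht0⟩
  choose r hr1 hr2 hr3 using hroot
  have hanti : ∀ (a b : Fin N), (a:ℕ) < (b:ℕ) → r b < r a := by
    intro a b hab
    have h1 : r b < sp N (b:ℕ) := hr2 b
    have h2 : sp N (b:ℕ) ≤ sp N ((a:ℕ)+1) := by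
      rcases eq_or_lt_of_le (show (a:ℕ)+1 ≤ (b:ℕ) from hab) with he | hl
      · rw [← he]
      · exact le_of_lt (sp_anti hN hl (by omega : (b:ℕ) ≤ N))
    have h3 : sp N ((a:ℕ)+1) < r a := hr1 a
    linarith
  have hinj : Function.Injective r := by
    intro a b hab
    by_contra hne
    rcases Nat.lt_or_ge (a:ℕ) (b:ℕ) with h | h
    · have := hanti a b h; rw [hab] at this; exact lt_irrefl _ this
    · have hba : (b:ℕ) < (a:ℕ) := by
        rcases Nat.lt_or_ge (b:ℕ) (a:ℕ) with h' | h'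
        · exact h'
        · exact absurd (Fin.ext (le_antisymm h' h)) hne
      have := hanti b a hba; rw [hab] at this; exact lt_irrefl _ this
  set S : Finset ℝ := Finset.image (fun k : Fin N => r k) Finset.univ with hS
  have hSroot : ∀ x ∈ S, psR N z x = 0 := by
    intro x hx
    rw [hS] at hx
    simp only [Finset.mem_image, Finset.mem_univ, true_and] at hx
    obtain ⟨k, rfl⟩ := hx
    exact hr3 k
  refine ⟨S, ?_, ?_⟩
  · rw [hS, Finset.card_image_of_injective _ hinj, Finset.card_univ, Fintype.card_fin]
  · intro y
    set Q : Polynomial ℂ :=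
      Polynomial.C (z * starRingEnd ℂ z) * Polynomial.Chebyshev.U ℂ ((N-2:ℕ):ℤ)
        - Polynomial.C (z + starRingEnd ℂ z) * Polynomial.Chebyshev.U ℂ ((N-1:ℕ):ℤ)
        + Polynomial.Chebyshev.U ℂ ((N:ℕ):ℤ) with hQ
    have heval : ∀ w : ℂ, Q.eval w = Psec N z w := by
      intro w
      rw [hQ, Psec, chebU_eval, chebU_eval, chebU_eval]
      simp
    have hQdeg : Q.natDegree ≤ N := by
      rw [hQ]
      refine le_trans (Polynomial.natDegree_add_le _ _)
        (max_le (le_trans (Polynomial.natDegree_sub_le _ _) (max_le ?_ ?_)) ?_)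
      · exact le_trans (Polynomial.natDegree_C_mul_le _ _)
          (le_trans (U_natDegree_le (N-2)) (by omega))
      · exact le_trans (Polynomial.natDegree_C_mul_le _ _)
          (le_trans (U_natDegree_le (N-1)) (by omega))
      · exact U_natDegree_le N
    have hQcoeff : Q.coeff N = 2^N := by
      rw [hQ, Polynomial.coeff_add, Polynomial.coeff_sub, Polynomial.coeff_C_mul,
        Polynomial.coeff_C_mul,
        Polynomial.coeff_eq_zero_of_natDegree_lt
          (lt_of_le_of_lt (U_natDegree_le (N-2)) (by omega)),
        Polynomial.coeff_eq_zero_of_natDegree_lt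
          (lt_of_le_of_lt (U_natDegree_le (N-1)) (by omega)),
        U_coeff N]
      ring
    have hQne : Q ≠ 0 := by
      intro h
      rw [h, Polynomial.coeff_zero] at hQcoeff
      exact (pow_ne_zero N (two_ne_zero)) hQcoeff.symm
    have hSrootC : ∀ x ∈ S, Psec N z ((x : ℝ) : ℂ) = 0 := by
      intro x hx
      rw [Psec_ofReal, hSroot x hx]
      norm_num
    constructor
    · intro hy
      by_contra hc
      push_neg at hc
      have hymem : y ∉ S.image (fun x : ℝ => (x:ℂ)) := by
        simp only [Finset.mem_image]
        rintro ⟨x, hx, rfl⟩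
        exact hc x hx rfl
      set Z : Finset ℂ := insert y (S.image (fun x : ℝ => (x:ℂ))) with hZ
      have hcard : Z.card = N + 1 := by
        rw [hZ, Finset.card_insert_of_notMem hymem,
          Finset.card_image_of_injective _ Complex.ofReal_injective,
          hS, Finset.card_image_of_injective _ hinj, Finset.card_univ, Fintype.card_fin]
      have hsub : Z.val ⊆ Q.roots := by
        intro x hx
        rw [Finset.mem_val] at hx
        rw [Polynomial.mem_roots hQne]
        rw [hZ, Finset.mem_insert] at hx
        rcases hx with rfl | hx
        · exact (Polynomial.IsRoot.def).mpr (by rw [heval]; exact hy)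
        · simp only [Finset.mem_image] at hx
          obtain ⟨x', hx', rfl⟩ := hx
          exact (Polynomial.IsRoot.def).mpr (by rw [heval]; exact hSrootC x' hx')
      have hle := Polynomial.card_le_degree_of_subset_roots hsub
      omega
    · rintro ⟨r', hr', rfl⟩
      exact hSrootC r' hr'
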